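/- For each real n > 0, let p*(n) denote the unique positive real solution of n² = p²((4/3)p + 1), and let N(p) = n³/p + 6n² + n(p+1)(2p+1)/3. Then N(p*(n))/n^{7/3} → (4/3)^{1/3} + (2/3)(3/4)^{2/3} as n → ∞ (so the optimally multithreaded cCG algorithm has worst-case cost O(n^{2+1/3}) multiplications, with constant approximately 1.651). -/

import Mathlib

open Filter

/-- If `p*(n)` denotes, for each real `n > 0`, the unique positive real
solution of `n² = p²((4/3)p + 1)`, and `N(p) = n³/p + 6n² + n(p+1)(2p+1)/3`, then
`N(p*(n))/n^{7/3} → (4/3)^{1/3} + (2/3)(3/4)^{2/3}` as `n → ∞` (cost `O(n^{2+1/3})`,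
with constant approximately `1.651`). -/
theorem cCG_optimal_cost_asymptotics
    (pstar : ℝ → ℝ)
    (hpstar : ∀ n : ℝ, 0 < n →
      0 < pstar n ∧ n ^ 2 = (pstar n) ^ 2 * ((4 / 3) * pstar n + 1)) :
    Tendsto
      (fun n : ℝ =>
        (n ^ 3 / pstar n + 6 * n ^ 2 + n * (pstar n + 1) * (2 * pstar n + 1) / 3) /
          n ^ ((7 : ℝ) / 3))
      atTop
      (nhds ((4 / 3 : ℝ) ^ ((1 : ℝ) / 3) + (2 / 3) * (3 / 4 : ℝ) ^ ((2 : ℝ) / 3))) := by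
  set c : ℝ := (3/4 : ℝ) ^ ((1:ℝ)/3) with hc
  have hc_pos : 0 < c := Real.rpow_pos_of_pos (by norm_num) _
  have hc3 : c ^ 3 = 3/4 := by
    rw [hc, ← Real.rpow_natCast ((3/4:ℝ) ^ ((1:ℝ)/3)) 3, ← Real.rpow_mul (by norm_num)]
    norm_num
  set q : ℝ → ℝ := fun n => pstar n / n ^ ((2:ℝ)/3) with hqdef
  -- key identity and positivity
  have key : ∀ n : ℝ, 0 < n →
      0 < q n ∧ (4/3) * (q n)^3 + (q n)^2 * n ^ (-((2:ℝ)/3)) = 1 := by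
    intro n hn
    obtain ⟨hp, heq⟩ := hpstar n hn
    have hs : (0:ℝ) < n ^ ((2:ℝ)/3) := Real.rpow_pos_of_pos hn _
    have hs3 : (n ^ ((2:ℝ)/3)) ^ 3 = n ^ 2 := by
      rw [← Real.rpow_natCast (n ^ ((2:ℝ)/3)) 3, ← Real.rpow_mul hn.le,
        ← Real.rpow_natCast n 2]
      norm_num
    have hqpos : 0 < q n := div_pos hp hs
    refine ⟨hqpos, ?_⟩
    have hneg : n ^ (-((2:ℝ)/3)) = (n ^ ((2:ℝ)/3))⁻¹ := Real.rpow_neg hn.le _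
    have hval : (4/3) * (q n)^3 + (q n)^2 * (n ^ ((2:ℝ)/3))⁻¹
        = ((4/3) * (pstar n)^3 + (pstar n)^2) / (n ^ ((2:ℝ)/3))^3 := by
      simp only [hqdef]
      field_simp
    have hnum : (4/3) * (pstar n)^3 + (pstar n)^2 = n ^ 2 := by
      rw [heq]; ring
    rw [hneg, hval, hs3, hnum, div_self (by positivity)]
  -- upper bound
  have hub : ∀ n : ℝ, 0 < n → q n ≤ c := by
    intro n hn
    obtain ⟨hqpos, hkey⟩ := key n hn
    have h1 : 0 ≤ (q n)^2 * n ^ (-((2:ℝ)/3)) := by positivity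
    have h3 : (q n)^3 ≤ c^3 := by rw [hc3]; nlinarith
    exact le_of_pow_le_pow_left₀ (by norm_num) hc_pos.le h3
  -- lower bound (eventually)
  have hnegtend : Tendsto (fun n : ℝ => n ^ (-((2:ℝ)/3))) atTop (nhds 0) :=
    tendsto_rpow_neg_atTop (by norm_num)
  have hLtend : Tendsto (fun n : ℝ => 3/4 - (3/4) * c^2 * n ^ (-((2:ℝ)/3))) atTop
      (nhds (3/4)) := by
    have := (hnegtend.const_mul ((3/4) * c^2)).const_sub (3/4 : ℝ)
    simpa [mul_assoc] using this
  have hLnn : ∀ᶠ n : ℝ in atTop, 0 ≤ 3/4 - (3/4) * c^2 * n ^ (-((2:ℝ)/3)) := by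
    have := hLtend.eventually (eventually_gt_nhds (show (0:ℝ) < 3/4 by norm_num))
    filter_upwards [this] with n h using le_of_lt h
  have hlb : ∀ᶠ n : ℝ in atTop,
      (3/4 - (3/4) * c^2 * n ^ (-((2:ℝ)/3))) ^ ((1:ℝ)/3) ≤ q n := by
    filter_upwards [hLnn, eventually_gt_atTop (0:ℝ)] with n hL hn
    obtain ⟨hqpos, hkey⟩ := key n hn
    have hnneg : (0:ℝ) < n ^ (-((2:ℝ)/3)) := Real.rpow_pos_of_pos hn _
    have hq_le : q n ≤ c := hub n hn
    have hq3 : 3/4 - (3/4) * c^2 * n ^ (-((2:ℝ)/3)) ≤ (q n)^3 := by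
      nlinarith [mul_le_mul_of_nonneg_right
        (mul_self_le_mul_self hqpos.le hq_le) hnneg.le]
    calc (3/4 - (3/4) * c^2 * n ^ (-((2:ℝ)/3))) ^ ((1:ℝ)/3)
        ≤ ((q n)^3) ^ ((1:ℝ)/3) := Real.rpow_le_rpow hL hq3 (by norm_num)
      _ = q n := by
          rw [← Real.rpow_natCast (q n) 3, ← Real.rpow_mul hqpos.le]
          norm_num
  have hglb : Tendsto (fun n : ℝ => (3/4 - (3/4) * c^2 * n ^ (-((2:ℝ)/3))) ^ ((1:ℝ)/3))
      atTop (nhds c) := by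
    have := hLtend.rpow_const (p := (1:ℝ)/3) (Or.inl (by norm_num))
    simpa [hc] using this
  have hqtend : Tendsto q atTop (nhds c) := by
    refine tendsto_of_tendsto_of_tendsto_of_le_of_le' hglb tendsto_const_nhds hlb ?_
    filter_upwards [eventually_gt_atTop (0:ℝ)] with n hn using hub n hn
  -- limit of the model function
  have h13 : Tendsto (fun n : ℝ => n ^ (-((1:ℝ)/3))) atTop (nhds 0) :=
    tendsto_rpow_neg_atTop (by norm_num)
  have h43 : Tendsto (fun n : ℝ => n ^ (-((4:ℝ)/3))) atTop (nhds 0) :=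
    tendsto_rpow_neg_atTop (by norm_num)
  have hF : Tendsto (fun n : ℝ =>
      (q n)⁻¹ + 6 * n ^ (-((1:ℝ)/3)) + (2/3) * (q n)^2 + q n * n ^ (-((2:ℝ)/3))
        + (1/3) * n ^ (-((4:ℝ)/3))) atTop
      (nhds (c⁻¹ + 6 * 0 + (2/3) * c^2 + c * 0 + (1/3) * 0)) := by
    exact ((((hqtend.inv₀ hc_pos.ne').add (h13.const_mul 6)).add
      ((hqtend.pow 2).const_mul (2/3))).add (hqtend.mul hnegtend)).add
      (h43.const_mul (1/3))
  have hval : c⁻¹ + 6 * 0 + (2/3) * c^2 + c * 0 + (1/3) * 0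
      = (4/3 : ℝ) ^ ((1:ℝ)/3) + (2/3) * (3/4 : ℝ) ^ ((2:ℝ)/3) := by
    have h1 : c⁻¹ = (4/3 : ℝ) ^ ((1:ℝ)/3) := by
      rw [hc, ← Real.inv_rpow (by norm_num : (0:ℝ) ≤ 3/4)]
      norm_num
    have h2 : c^2 = (3/4 : ℝ) ^ ((2:ℝ)/3) := by
      rw [hc, ← Real.rpow_natCast ((3/4:ℝ) ^ ((1:ℝ)/3)) 2, ← Real.rpow_mul (by norm_num)]
      norm_num
    rw [h1, h2]; ring
  rw [← hval]
  refine hF.congr' ?_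
  filter_upwards [eventually_gt_atTop (0:ℝ)] with n hn
  obtain ⟨hp, heq⟩ := hpstar n hn
  have ht : (0:ℝ) < n ^ ((1:ℝ)/3) := Real.rpow_pos_of_pos hn _
  have ht3 : (n ^ ((1:ℝ)/3)) ^ 3 = n := by
    rw [← Real.rpow_natCast (n ^ ((1:ℝ)/3)) 3, ← Real.rpow_mul hn.le]
    norm_num
  have hs2 : n ^ ((2:ℝ)/3) = (n ^ ((1:ℝ)/3)) ^ 2 := by
    rw [← Real.rpow_natCast (n ^ ((1:ℝ)/3)) 2, ← Real.rpow_mul hn.le]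
    norm_num
  have h73 : n ^ ((7:ℝ)/3) = (n ^ ((1:ℝ)/3)) ^ 7 := by
    rw [← Real.rpow_natCast (n ^ ((1:ℝ)/3)) 7, ← Real.rpow_mul hn.le]
    norm_num
  have hm1 : n ^ (-((1:ℝ)/3)) = (n ^ ((1:ℝ)/3))⁻¹ := Real.rpow_neg hn.le _
  have hm2 : n ^ (-((2:ℝ)/3)) = ((n ^ ((1:ℝ)/3)) ^ 2)⁻¹ := by
    rw [Real.rpow_neg hn.le, hs2]
  have hm4 : n ^ (-((4:ℝ)/3)) = ((n ^ ((1:ℝ)/3)) ^ 4)⁻¹ := by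
    rw [Real.rpow_neg hn.le, ← Real.rpow_natCast (n ^ ((1:ℝ)/3)) 4,
      ← Real.rpow_mul hn.le]
    norm_num
  simp only [hqdef, hs2, h73, hm1, hm2, hm4]
  set P := pstar n with hP
  set t := n ^ ((1:ℝ)/3) with htdef
  rw [show n = t ^ 3 from ht3.symm]
  field_simp
  ring
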